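/- For all x in (0, π/2), sin(x) · cosh(x) > x. -/

import Mathlib

theorem stmt_0 (x : ℝ) (hx : x ∈ Set.Ioo 0 (Real.pi / 2)) :
    Real.sin x * Real.cosh x > x := by
  obtain ⟨hx0, hxp⟩ := hx
  set g : ℝ → ℝ := fun y => Real.cos y * Real.cosh y + Real.sin y * Real.sinh y - 1 with hg
  have hgderiv : ∀ y : ℝ, HasDerivAt g (2 * Real.cos y * Real.sinh y) y := by
    intro y
    have h : HasDerivAt g _ y := (((Real.hasDerivAt_cos y).mul (Real.hasDerivAt_cosh y)).add
      ((Real.hasDerivAt_sin y).mul (Real.hasDerivAt_sinh y))).sub_const 1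
    convert h using 1
    ring
  have hgmono : StrictMonoOn g (Set.Icc 0 (Real.pi / 2)) := by
    apply strictMonoOn_of_deriv_pos (convex_Icc _ _)
    · exact (((Real.continuous_cos.mul Real.continuous_cosh).add
        (Real.continuous_sin.mul Real.continuous_sinh)).sub continuous_const).continuousOn
    · intro y hy
      rw [interior_Icc] at hy
      rw [(hgderiv y).deriv]
      have h1 : 0 < Real.cos y := Real.cos_pos_of_mem_Ioo ⟨by linarith [Real.pi_pos, hy.1], hy.2⟩
      have h2 : 0 < Real.sinh y := Real.sinh_pos_iff.mpr hy.1
      positivity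
  have hgpos : ∀ y ∈ Set.Ioo (0:ℝ) (Real.pi / 2), 0 < g y := by
    intro y hy
    have := hgmono (Set.left_mem_Icc.mpr (by linarith [Real.pi_pos])) ⟨hy.1.le, hy.2.le⟩ hy.1
    simpa [hg] using this
  set f : ℝ → ℝ := fun y => Real.sin y * Real.cosh y - y with hf
  have hfderiv : ∀ y : ℝ, HasDerivAt f (g y) y := by
    intro y
    have h : HasDerivAt f _ y := ((Real.hasDerivAt_sin y).mul (Real.hasDerivAt_cosh y)).sub (hasDerivAt_id y)
    convert h using 1
  have hfmono : StrictMonoOn f (Set.Icc 0 (Real.pi / 2)) := by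
    apply strictMonoOn_of_deriv_pos (convex_Icc _ _)
    · exact ((Real.continuous_sin.mul Real.continuous_cosh).sub continuous_id).continuousOn
    · intro y hy
      rw [interior_Icc] at hy
      rw [(hfderiv y).deriv]
      exact hgpos y hy
  have := hfmono (Set.left_mem_Icc.mpr (by linarith [Real.pi_pos])) ⟨hx0.le, hxp.le⟩ hx0
  simp only [hf] at this
  simp at this
  linarith
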